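/- Let N ∈ LC be non-quasianalytic (Σ_{p≥1} 1/ν_p < ∞ where ν_p = N_p/N_{p-1}) and r > 0 with Σ_{p≥1} (1/ν_p)^{1/r} < ∞. Define τ_p := p/(ν_p)^{1/r} + Σ_{j≥p} (1/ν_j)^{1/r} for p ≥ 1, σ_0 := 1, σ_p := τ_1 p / τ_p, and S_p := σ_0 σ_1 ⋯ σ_p. Then the sequence (σ_p)_{p ≥ 1} is nondecreasing; that is, S is log-convex. -/

import Mathlib

open Filter

/-- The descendant `S` of `N^{1/r}` (quotients `σ_p = τ_1 p / τ_p` with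
`τ_p = p/(ν_p)^{1/r} + Σ_{j≥p} (1/ν_j)^{1/r}`) is log-convex: its sequence of quotients
`(σ_p)_{p≥1}` is nondecreasing. -/
theorem stmt12 (N : ℕ → ℝ) (hpos : ∀ p, 0 < N p)
    (hN0 : N 0 = 1) (hN01 : N 0 ≤ N 1)
    (ν : ℕ → ℝ) (hν0 : ν 0 = 1) (hν : ∀ p : ℕ, ν (p + 1) = N (p + 1) / N p)
    (hνmono : ∀ p : ℕ, 1 ≤ p → ν p ≤ ν (p + 1))
    (hNgrow : Tendsto (fun p : ℕ => (N p) ^ ((1 : ℝ) / (p : ℝ))) atTop atTop)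
    (hnq : Summable (fun p : ℕ => 1 / ν p))
    (r : ℝ) (hr : 0 < r)
    (hsum : Summable (fun p : ℕ => (1 / ν p) ^ ((1 : ℝ) / r)))
    (τ σS S : ℕ → ℝ)
    (hτ : ∀ p : ℕ, 1 ≤ p →
      τ p = (p : ℝ) / (ν p) ^ ((1 : ℝ) / r) +
        ∑' j : ℕ, (1 / ν (p + j)) ^ ((1 : ℝ) / r))
    (hσS0 : σS 0 = 1)
    (hσS : ∀ p : ℕ, 1 ≤ p → σS p = τ 1 * (p : ℝ) / τ p)
    (hS : ∀ p : ℕ, S p = ∏ i ∈ Finset.range (p + 1), σS i) :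
    ∀ p : ℕ, 1 ≤ p → σS p ≤ σS (p + 1) := by
  set g : ℕ → ℝ := fun j => (1 / ν j) ^ ((1 : ℝ) / r) with hg
  have hνpos : ∀ p, 0 < ν p := by
    intro p
    cases p with
    | zero => rw [hν0]; norm_num
    | succ n => rw [hν]; exact div_pos (hpos _) (hpos _)
  have hgpos : ∀ j, 0 < g j := fun j =>
    Real.rpow_pos_of_pos (one_div_pos.mpr (hνpos j)) _
  have hgdef : ∀ j, g j = 1 / (ν j) ^ ((1 : ℝ) / r) := by
    intro j
    show (1 / ν j) ^ ((1 : ℝ) / r) = 1 / (ν j) ^ ((1 : ℝ) / r)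
    rw [Real.div_rpow zero_le_one (hνpos j).le, Real.one_rpow]
  have hgmono : ∀ p, 1 ≤ p → g (p + 1) ≤ g p := by
    intro p hp
    apply Real.rpow_le_rpow (one_div_pos.mpr (hνpos _)).le
    · exact one_div_le_one_div_of_le (hνpos p) (hνmono p hp)
    · positivity
  have hsum' : ∀ p : ℕ, Summable (fun j => g (p + j)) := by
    intro p
    have := (summable_nat_add_iff p).mpr hsum
    exact this.congr (fun n => by simp [hg, add_comm])
  have htail : ∀ p : ℕ, (∑' j, g (p + j)) = g p + ∑' j, g (p + 1 + j) := by
    intro p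
    rw [Summable.tsum_eq_zero_add (hsum' p)]
    congr 1
    exact tsum_congr fun b => by rw [show p + (b + 1) = p + 1 + b by omega]
  have hτalt : ∀ p : ℕ, 1 ≤ p → τ p = ((p : ℝ) + 1) * g p + ∑' j, g (p + 1 + j) := by
    intro p hp
    rw [hτ p hp]
    have : (∑' j : ℕ, (1 / ν (p + j)) ^ ((1 : ℝ) / r)) = ∑' j, g (p + j) := rfl
    rw [this, htail p, hgdef p]
    field_simp
    ring
  have hτpos : ∀ p : ℕ, 1 ≤ p → 0 < τ p := by
    intro p hp
    rw [hτalt p hp]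
    have h1 : 0 < ((p : ℝ) + 1) * g p := by
      have := hgpos p; positivity
    have h2 : 0 < ∑' j, g (p + 1 + j) :=
      Summable.tsum_pos (hsum' (p + 1)) (fun j => (hgpos _).le) 0 (hgpos _)
    linarith
  have hτmono : ∀ p : ℕ, 1 ≤ p → τ (p + 1) ≤ τ p := by
    intro p hp
    rw [hτalt p hp, hτalt (p + 1) (by omega)]
    push_cast
    have key : ((p : ℝ) + 1 + 1) * g (p + 1) + ∑' j, g (p + 1 + 1 + j)
        ≤ ((p : ℝ) + 1) * g p + g (p + 1) + ∑' j, g (p + 1 + 1 + j) := by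
      have := hgmono p hp
      have hp1 : (1 : ℝ) ≤ (p : ℝ) := by exact_mod_cast hp
      nlinarith [hgpos (p + 1)]
    calc ((p : ℝ) + 1 + 1) * g (p + 1) + ∑' j, g (p + 1 + 1 + j)
        ≤ ((p : ℝ) + 1) * g p + g (p + 1) + ∑' j, g (p + 1 + 1 + j) := key
      _ = ((p : ℝ) + 1) * g p + (g (p + 1) + ∑' j, g (p + 1 + 1 + j)) := by ring
      _ = ((p : ℝ) + 1) * g p + ∑' j, g (p + 1 + j) := by rw [← htail (p + 1)]
  intro p hp
  have hτ1 : 0 < τ 1 := hτpos 1 le_rfl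
  have hτp : 0 < τ p := hτpos p hp
  have hτp1 : 0 < τ (p + 1) := hτpos (p + 1) (by omega)
  rw [hσS p hp, hσS (p + 1) (by omega)]
  rw [div_le_div_iff₀ hτp hτp1]
  push_cast
  have hmono := hτmono p hp
  have hp1 : (1 : ℝ) ≤ (p : ℝ) := by exact_mod_cast hp
  have h1 : τ 1 * (p : ℝ) * τ (p + 1) ≤ τ 1 * (p : ℝ) * τ p :=
    mul_le_mul_of_nonneg_left hmono (by positivity)
  have h2 : τ 1 * (p : ℝ) * τ p ≤ τ 1 * ((p : ℝ) + 1) * τ p := by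
    have : τ 1 * (p : ℝ) ≤ τ 1 * ((p : ℝ) + 1) := by nlinarith
    exact mul_le_mul_of_nonneg_right this hτp.le
  linarith
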